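/- If r(u,v) = (u cos θ (cos v, sin v) + γ(v), u sin θ) with γ smooth and the tangent vectors r_u, r_v are orthogonal at every point, then γ'(v) is parallel to (-sin v, cos v), i.e. there exists a function α with γ'(v) = cos θ·α(v)·(-sin v, cos v) (assuming cos θ ≠ 0). -/

import Mathlib

open Real

lemma euclid_hasDerivAt {f : ℝ → EuclideanSpace ℝ (Fin 3)} {d : EuclideanSpace ℝ (Fin 3)}
    {x : ℝ} (h : ∀ i, HasDerivAt (fun t => f t i) (d i) x) : HasDerivAt f d x := by
  set e := EuclideanSpace.equiv (Fin 3) ℝ with he_def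
  have he : HasDerivAt (fun t => e (f t)) (e d) x := hasDerivAt_pi.2 h
  have h2 := (e.symm.toContinuousLinearMap.hasFDerivAt.comp x he.hasFDerivAt).hasDerivAt
  have h3 : HasDerivAt (fun t => e.symm (e (f t))) (e.symm (e d)) x :=
    e.symm.hasFDerivAt.comp_hasDerivAt x he
  simpa using h3

/-- If `r(u,v) = (u cos θ (cos v, sin v) + γ(v), u sin θ)` with `γ` smooth
and `r_u ⊥ r_v` at every point (and `cos θ ≠ 0`), then `γ'` is parallel to
`(-sin v, cos v)`: there is a function `α` with `γ'(v) = cos θ · α(v) · (-sin v, cos v)`. -/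
theorem orthogonality_forces_gamma
    (θ : ℝ) (hcos : Real.cos θ ≠ 0)
    (γ₁ γ₂ : ℝ → ℝ) (hγ₁ : Differentiable ℝ γ₁) (hγ₂ : Differentiable ℝ γ₂)
    (r : ℝ → ℝ → EuclideanSpace ℝ (Fin 3))
    (hr : ∀ u v, r u v =
      ![u * Real.cos θ * Real.cos v + γ₁ v, u * Real.cos θ * Real.sin v + γ₂ v,
        u * Real.sin θ])
    (horth : ∀ u v, (inner ℝ (deriv (fun t => r t v) u) (deriv (fun t => r u t) v) : ℝ) = 0) :
    ∃ α : ℝ → ℝ, ∀ v, deriv γ₁ v = Real.cos θ * α v * (-Real.sin v) ∧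
      deriv γ₂ v = Real.cos θ * α v * (Real.cos v) := by
  have key : ∀ v, Real.cos v * deriv γ₁ v + Real.sin v * deriv γ₂ v = 0 := by
    intro v
    have h1 : HasDerivAt (fun t => r t v)
        (WithLp.toLp 2 (![Real.cos θ * Real.cos v, Real.cos θ * Real.sin v, Real.sin θ] : Fin 3 → ℝ) :
          EuclideanSpace ℝ (Fin 3)) 0 := by
      apply euclid_hasDerivAt
      intro i
      simp only [hr]
      fin_cases i
      · simpa [mul_assoc] using
          ((hasDerivAt_id (0:ℝ)).mul_const (Real.cos θ * Real.cos v)).add_const (γ₁ v)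
      · simpa [mul_assoc] using
          ((hasDerivAt_id (0:ℝ)).mul_const (Real.cos θ * Real.sin v)).add_const (γ₂ v)
      · simpa using (hasDerivAt_id (0:ℝ)).mul_const (Real.sin θ)
    have h2 : HasDerivAt (fun t => r 0 t)
        (WithLp.toLp 2 (![deriv γ₁ v, deriv γ₂ v, 0] : Fin 3 → ℝ) : EuclideanSpace ℝ (Fin 3)) v := by
      apply euclid_hasDerivAt
      intro i
      simp only [hr]
      fin_cases i
      · simpa using (hγ₁ v).hasDerivAt
      · simpa using (hγ₂ v).hasDerivAt
      · simpa using hasDerivAt_const v (0 : ℝ)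
    have h := horth 0 v
    rw [h1.deriv, h2.deriv] at h
    simp only [PiLp.inner_apply, RCLike.inner_apply, starRingEnd_apply, star_trivial,
      Fin.sum_univ_three, Matrix.cons_val_zero, Matrix.cons_val_one, Matrix.head_cons,
      Matrix.cons_val_two, Matrix.tail_cons, mul_zero, add_zero] at h
    have h' : Real.cos θ * (Real.cos v * deriv γ₁ v + Real.sin v * deriv γ₂ v) = 0 := by
      linear_combination h
    exact (mul_eq_zero.mp h').resolve_left hcos
  refine ⟨fun v => (-Real.sin v * deriv γ₁ v + Real.cos v * deriv γ₂ v) / Real.cos θ,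
    fun v => ?_⟩
  have h := key v
  have hpyth := Real.sin_sq_add_cos_sq v
  constructor <;> field_simp
  · linear_combination Real.cos v * h - deriv γ₁ v * hpyth
  · linear_combination Real.sin v * h - deriv γ₂ v * hpyth
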